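/- Let v be a nonzero vector in a real inner product space and ε a perturbation with decomposition ε = ε_∥ + ε_⊥, where ε_∥ = αv is parallel to v and ε_⊥ is orthogonal to v. If ‖ε_⊥‖ ≥ ‖v‖ and ‖ε_∥‖ ≤ K‖v‖ for some K ≥ 0 (and v + ε ≠ 0), then the normalized vectors satisfy ‖(v+ε)/‖v+ε‖ − v/‖v‖‖ ≥ 1/√((1+K)² + 1). -/

import Mathlib

/-- Angular collapse lower bound: if the perturbation dominates in the orthogonal
direction and its parallel component is bounded by `K‖v‖`, the unit direction of
`v + ε` deviates from that of `v` by at least `1/√((1+K)² + 1)`. -/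
theorem angular_collapse {E : Type*} [NormedAddCommGroup E] [InnerProductSpace ℝ E]
    (v ε εpar εperp : E) (α K : ℝ)
    (hv : v ≠ 0)
    (hdec : ε = εpar + εperp)
    (hpar : εpar = α • v)
    (hperp : (inner ℝ εperp v : ℝ) = 0)
    (hK : 0 ≤ K)
    (hdom : ‖v‖ ≤ ‖εperp‖)
    (hparbd : ‖εpar‖ ≤ K * ‖v‖)
    (hne : v + ε ≠ 0) :
    1 / Real.sqrt ((1 + K) ^ 2 + 1) ≤ ‖‖v + ε‖⁻¹ • (v + ε) - ‖v‖⁻¹ • v‖ := by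
  have hvpos : (0:ℝ) < ‖v‖ := norm_pos_iff.mpr hv
  have hSpos : (0:ℝ) < ‖εperp‖ := lt_of_lt_of_le hvpos hdom
  have hWeq : v + ε = (1 + α) • v + εperp := by
    rw [hdec, hpar]; module
  have hWpos : (0:ℝ) < ‖v + ε‖ := norm_pos_iff.mpr hne
  have hvperp : (inner ℝ v εperp : ℝ) = 0 := by rw [real_inner_comm]; exact hperp
  have hsvperp : (inner ℝ ((1 + α) • v) εperp : ℝ) = 0 := by
    rw [real_inner_smul_left, hvperp]; ring
  have hwperp : (inner ℝ (v + ε) εperp : ℝ) = ‖εperp‖ ^ 2 := by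
    rw [hWeq, inner_add_left, hsvperp, real_inner_self_eq_norm_sq]; ring
  -- Cauchy–Schwarz step
  have key : ‖εperp‖ / ‖v + ε‖ ≤ ‖‖v + ε‖⁻¹ • (v + ε) - ‖v‖⁻¹ • v‖ := by
    have hin : (inner ℝ (‖v + ε‖⁻¹ • (v + ε) - ‖v‖⁻¹ • v) εperp : ℝ)
        = ‖v + ε‖⁻¹ * ‖εperp‖ ^ 2 := by
      rw [inner_sub_left, real_inner_smul_left, real_inner_smul_left, hwperp, hvperp]
      ring
    have hcs := abs_real_inner_le_norm (‖v + ε‖⁻¹ • (v + ε) - ‖v‖⁻¹ • v) εperp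
    rw [hin] at hcs
    have habs : |‖v + ε‖⁻¹ * ‖εperp‖ ^ 2| = ‖v + ε‖⁻¹ * ‖εperp‖ ^ 2 :=
      abs_of_nonneg (by positivity)
    rw [habs] at hcs
    have := (div_le_iff₀ hSpos).mpr hcs
    calc ‖εperp‖ / ‖v + ε‖ = ‖v + ε‖⁻¹ * ‖εperp‖ ^ 2 / ‖εperp‖ := by
          field_simp
      _ ≤ _ := this
  -- bound ‖v + ε‖ ≤ √C * ‖εperp‖
  have halpha : |α| ≤ K := by
    have h1 : |α| * ‖v‖ ≤ K * ‖v‖ := by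
      rwa [hpar, norm_smul, Real.norm_eq_abs] at hparbd
    exact le_of_mul_le_mul_right h1 hvpos
  have hsq : ‖v + ε‖ ^ 2 ≤ ((1 + K) ^ 2 + 1) * ‖εperp‖ ^ 2 := by
    have h2 : ‖v + ε‖ ^ 2 = ‖(1 + α) • v‖ ^ 2 + ‖εperp‖ ^ 2 := by
      rw [hWeq, norm_add_sq_real, hsvperp]; ring
    have h3 : ‖(1 + α) • v‖ ≤ (1 + K) * ‖εperp‖ := by
      rw [norm_smul, Real.norm_eq_abs]
      have h1a : |1 + α| ≤ 1 + K := by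
        calc |1 + α| ≤ |(1:ℝ)| + |α| := abs_add_le 1 α
          _ ≤ 1 + K := by simp [halpha]
      exact mul_le_mul h1a hdom (le_of_lt hvpos) (by linarith)
    have h4 : ‖(1 + α) • v‖ ^ 2 ≤ ((1 + K) * ‖εperp‖) ^ 2 := by
      have hn := norm_nonneg ((1 + α) • v)
      nlinarith
    nlinarith
  have hC : (0:ℝ) < (1 + K) ^ 2 + 1 := by positivity
  have hsqrtC : (0:ℝ) < Real.sqrt ((1 + K) ^ 2 + 1) := Real.sqrt_pos.mpr hC
  have hWle : ‖v + ε‖ ≤ Real.sqrt ((1 + K) ^ 2 + 1) * ‖εperp‖ := by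
    have h5 : ‖v + ε‖ ^ 2 ≤ (Real.sqrt ((1 + K) ^ 2 + 1) * ‖εperp‖) ^ 2 := by
      rw [mul_pow, Real.sq_sqrt (le_of_lt hC)]; exact hsq
    have h6 : (0:ℝ) ≤ Real.sqrt ((1 + K) ^ 2 + 1) * ‖εperp‖ := by positivity
    nlinarith [norm_nonneg (v + ε)]
  have hfinal : 1 / Real.sqrt ((1 + K) ^ 2 + 1) ≤ ‖εperp‖ / ‖v + ε‖ := by
    rw [div_le_div_iff₀ hsqrtC hWpos]
    linarith
  linarith
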